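/- (Complement property of Majcode.) If σ, τ ∈ S_n satisfy Majcode σ = δ(Majcode τ), then Ligne σ = {1,2,…,n−1} ∖ Ligne τ. -/

import Mathlib

/-- Descent set (ligne of route) of a word, with 1-based positions. -/
def ligne (w : List ℕ) : Finset ℕ :=
  (Finset.Icc 1 (w.length - 1)).filter (fun i => w.getD (i-1) 0 > w.getD i 0)

/-- Major index of a word. -/
def maj (w : List ℕ) : ℕ := ∑ i ∈ ligne w, i

/-- Inversion number of a word. -/
def inv (w : List ℕ) : ℕ :=
  ((Finset.range w.length ×ˢ Finset.range w.length).filter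
    (fun p => p.1 < p.2 ∧ w.getD p.1 0 > w.getD p.2 0)).card

/-- `w` is (the one-line word of) a permutation of `1,…,n`. -/
def IsPermWord (n : ℕ) (w : List ℕ) : Prop := w.Perm (List.range' 1 n)

/-- One-line word of `σ ∈ S_n` with values in `1,…,n`. -/
def toWord {n : ℕ} (σ : Equiv.Perm (Fin n)) : List ℕ := List.ofFn (fun i => (σ i : ℕ) + 1)

/-- Subexcedent word: `0 ≤ d_i ≤ i-1` (1-based), i.e. `d_i ≤ i` for 0-based `i`. -/
def Subexcedent (w : List ℕ) : Prop := ∀ i < w.length, w.getD i 0 ≤ i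

/-- Subdiagonal word: `0 ≤ d_i ≤ n-i` (1-based). -/
def Subdiagonal (w : List ℕ) : Prop := ∀ i < w.length, w.getD i 0 + i + 1 ≤ w.length

/-- Lehmer code: `d_i = #{j < i : x_j > x_i}`. -/
def invcode (w : List ℕ) : List ℕ :=
  (List.range w.length).map (fun i => ((Finset.range i).filter (fun j => w.getD j 0 > w.getD i 0)).card)

/-- `Lc`-code: `d_i = #{j > i : x_i > x_j}`. -/
def lc (w : List ℕ) : List ℕ :=
  (List.range w.length).map (fun i => ((Finset.Ico (i+1) w.length).filter (fun j => w.getD i 0 > w.getD j 0)).card)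

/-- Major index code: `d_i = maj(σ|_i) - maj(σ|_{i-1})`, where `σ|_i` erases letters `> i`. -/
def majcode (w : List ℕ) : List ℕ :=
  (List.range w.length).map (fun i => maj (w.filter (· ≤ i+1)) - maj (w.filter (· ≤ i)))

/-- `Mc`-code: `d_i = maj(σ^{(i)}) - maj(σ^{(i+1)})`, where `σ^{(i)}` erases letters `< i`. -/
def mc (w : List ℕ) : List ℕ :=
  (List.range w.length).map (fun i => maj (w.filter (fun x => i+1 ≤ x)) - maj (w.filter (fun x => i+2 ≤ x)))

/-- One-line word of the inverse permutation. -/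
def invWord (w : List ℕ) : List ℕ :=
  (List.range w.length).map (fun i => w.idxOf (i+1) + 1)

/-- `Ic σ = Lc (σ⁻¹)`. -/
def ic (w : List ℕ) : List ℕ := lc (invWord w)

/-- Inverse ligne of route. -/
def iligne (w : List ℕ) : Finset ℕ := ligne (invWord w)

/-- Complement map `δ` on codes: `δ(d₁⋯d_n) = (0-d₁)(1-d₂)⋯(n-1-d_n)`. -/
def deltaC (w : List ℕ) : List ℕ :=
  (List.range w.length).map (fun i => i - w.getD i 0)

/-- Nondecreasing rearrangement of a word. -/
def sortW (w : List ℕ) : List ℕ := List.insertionSort (· ≤ ·) w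

/-- Set-valued statistic `El = Ligne ∘ Mc⁻¹` on subdiagonal words. -/
noncomputable def El (d : List ℕ) : Finset ℕ := by
  classical
  exact if h : ∃ w, IsPermWord d.length w ∧ mc w = d then ligne h.choose else ∅

/-- Set-valued statistic `Eul = Ligne ∘ Majcode⁻¹` on subexcedent words. -/
noncomputable def Eul (d : List ℕ) : Finset ℕ := by
  classical
  exact if h : ∃ w, IsPermWord d.length w ∧ majcode w = d then ligne h.choose else ∅


namespace Stmt6Aux

open Finset

/-- Insertion label value. -/
def Dval (L : Finset ℕ) (s k : ℕ) : ℕ :=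
  if s ∈ L then (L.filter (fun i => s ≤ i)).card
  else if s < k then s + 1 + (L.filter (fun i => s < i)).card
  else 0

/-- Ligne of the word obtained by inserting a maximal letter at slot `s`. -/
def newligne (L : Finset ℕ) (s k : ℕ) : Finset ℕ :=
  ((L.erase s).image (fun i => if i < s then i else i + 1)) ∪
    (if s < k then {s + 1} else ∅)

lemma mem_newligne (L : Finset ℕ) (s k j : ℕ) :
    j ∈ newligne L s k ↔
      (j ∈ L ∧ j < s) ∨ (j - 1 ∈ L ∧ s + 1 < j) ∨ (s < k ∧ j = s + 1) := by
  simp only [newligne, Finset.mem_union, Finset.mem_image, Finset.mem_erase]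
  constructor
  · rintro (⟨i, ⟨hne, hiL⟩, hij⟩ | hj)
    · by_cases hi : i < s
      · rw [if_pos hi] at hij; subst hij; exact Or.inl ⟨hiL, hi⟩
      · rw [if_neg hi] at hij
        refine Or.inr (Or.inl ?_)
        have : s < i := by omega
        subst hij; simp only [Nat.add_sub_cancel]; exact ⟨hiL, by omega⟩
    · by_cases hsk : s < k
      · rw [if_pos hsk] at hj; simp at hj; exact Or.inr (Or.inr ⟨hsk, hj⟩)
      · rw [if_neg hsk] at hj; simp at hj
  · rintro (⟨hjL, hjs⟩ | ⟨hjL, hjs⟩ | ⟨hsk, hj⟩)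
    · exact Or.inl ⟨j, ⟨by omega, hjL⟩, if_pos hjs⟩
    · refine Or.inl ⟨j - 1, ⟨by omega, hjL⟩, ?_⟩
      rw [if_neg (by omega)]; omega
    · right; rw [if_pos hsk]; simp [hj]

lemma newligne_subset (L : Finset ℕ) (s k : ℕ) (hL : L ⊆ Finset.Icc 1 (k-1)) :
    newligne L s k ⊆ Finset.Icc 1 k := by
  intro j hj
  rw [mem_newligne] at hj
  simp only [Finset.mem_Icc]
  rcases hj with ⟨hjL, _⟩ | ⟨hjL, hjs⟩ | ⟨hsk, hj⟩
  · have := hL hjL; simp only [Finset.mem_Icc] at this; omega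
  · have := hL hjL; simp only [Finset.mem_Icc] at this; omega
  · omega

lemma Dval_le (L : Finset ℕ) (s k : ℕ) (hL : L ⊆ Finset.Icc 1 (k-1)) :
    Dval L s k ≤ k := by
  unfold Dval
  have hcard : ∀ p : ℕ → Prop, ∀ _ : DecidablePred p, (L.filter p).card ≤ k - 1 := by
    intro p hp
    calc (L.filter p).card ≤ L.card := Finset.card_filter_le _ _
    _ ≤ (Finset.Icc 1 (k-1)).card := Finset.card_le_card hL
    _ = k - 1 := by rw [Nat.card_Icc]; omega
  split_ifs with h1 h2
  · have := hcard (fun i => s ≤ i) (by infer_instance); omega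
  · -- s ∉ L, s < k
    have hsub : L.filter (fun i => s < i) ⊆ Finset.Icc (s+1) (k-1) := by
      intro i hi
      simp only [Finset.mem_filter] at hi
      have := hL hi.1; simp only [Finset.mem_Icc] at this ⊢; omega
    have := Finset.card_le_card hsub
    rw [Nat.card_Icc] at this
    omega
  · omega

lemma sum_newligne (L : Finset ℕ) (s k : ℕ) (hL : L ⊆ Finset.Icc 1 (k-1)) (hs : s ≤ k) :
    ∑ i ∈ newligne L s k, i = (∑ i ∈ L, i) + Dval L s k := by
  have hdisj : Disjoint ((L.erase s).image (fun i => if i < s then i else i + 1))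
      (if s < k then ({s + 1} : Finset ℕ) else ∅) := by
    split_ifs with hsk
    · simp only [Finset.disjoint_singleton_right, Finset.mem_image, Finset.mem_erase, not_exists]
      rintro i ⟨⟨hne, hiL⟩, hij⟩
      revert hij
      split_ifs <;> omega
    · exact Finset.disjoint_empty_right _
  rw [newligne, Finset.sum_union hdisj, Finset.sum_image (by
    intro a _ b _ hab
    by_cases h1 : a < s <;> by_cases h2 : b < s <;>
      simp only [if_pos, if_neg, h1, h2, if_true, if_false] at hab <;> omega)]
  have h1 : ∀ i : ℕ, (if i < s then i else i + 1) = i + (if i < s then 0 else 1) := by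
    intro i; split_ifs <;> omega
  have h2 : ∑ i ∈ L.erase s, (if i < s then i else i + 1)
      = (∑ i ∈ L.erase s, i) + ((L.erase s).filter (fun i => ¬ i < s)).card := by
    simp only [h1]
    rw [Finset.sum_add_distrib, Finset.sum_ite, Finset.sum_const_zero, Finset.sum_const,
      smul_eq_mul, mul_one, zero_add]
  have h3 : (L.erase s).filter (fun i => ¬ i < s) = L.filter (fun i => s < i) := by
    ext i
    simp only [Finset.mem_filter, Finset.mem_erase]
    constructor
    · rintro ⟨⟨hne, hi⟩, h⟩; exact ⟨hi, by omega⟩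
    · rintro ⟨hi, h⟩; exact ⟨⟨by omega, hi⟩, by omega⟩
  have h4 : ∑ i ∈ (if s < k then ({s + 1} : Finset ℕ) else ∅), i
      = if s < k then s + 1 else 0 := by
    split_ifs <;> simp
  rw [h2, h3, h4]
  by_cases hsL : s ∈ L
  · have hse : (∑ i ∈ L.erase s, i) + s = ∑ i ∈ L, i :=
      Finset.sum_erase_add L _ hsL
    have hsk : s < k := by
      have := hL hsL; simp only [Finset.mem_Icc] at this; omega
    have h5 : L.filter (fun i => s ≤ i) = insert s (L.filter (fun i => s < i)) := by
      ext i
      simp only [Finset.mem_filter, Finset.mem_insert]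
      constructor
      · rintro ⟨hi, h⟩
        rcases Nat.eq_or_lt_of_le h with h' | h'
        · exact Or.inl h'.symm
        · exact Or.inr ⟨hi, h'⟩
      · rintro (rfl | ⟨hi, h⟩)
        · exact ⟨hsL, le_refl _⟩
        · exact ⟨hi, by omega⟩
    have h6 : s ∉ L.filter (fun i => s < i) := by
      simp only [Finset.mem_filter]; omega
    rw [Dval, if_pos hsL, h5, Finset.card_insert_of_notMem h6, if_pos hsk]
    omega
  · rw [Finset.erase_eq_of_notMem hsL, Dval, if_neg hsL]
    by_cases hsk : s < k
    · rw [if_pos hsk, if_pos hsk]; omega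
    · have hempty : L.filter (fun i => s < i) = ∅ := by
        rw [Finset.filter_eq_empty_iff]
        intro i hi
        have := hL hi; simp only [Finset.mem_Icc] at this; omega
      rw [if_neg hsk, if_neg hsk, hempty]
      simp

lemma card_filter_compl (L L' : Finset ℕ) (k t : ℕ) (hLsub : L ⊆ Finset.Icc 1 (k-1))
    (hL' : L' = Finset.Icc 1 (k-1) \ L) :
    (L.filter (fun i => t < i)).card + (L'.filter (fun i => t < i)).card = k - 1 - t := by
  subst hL'
  have h1 : (Finset.Icc 1 (k-1) \ L).filter (fun i => t < i)
      = (Finset.Icc 1 (k-1)).filter (fun i => t < i) \ L.filter (fun i => t < i) := by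
    ext i
    simp only [Finset.mem_filter, Finset.mem_sdiff]
    tauto
  have h2 : (Finset.Icc 1 (k-1)).filter (fun i => t < i) = Finset.Icc (t+1) (k-1) := by
    ext i
    simp only [Finset.mem_filter, Finset.mem_Icc]
    omega
  have hsub : L.filter (fun i => t < i) ⊆ Finset.Icc (t+1) (k-1) := by
    intro i hi
    simp only [Finset.mem_filter] at hi
    have := hLsub hi.1; simp only [Finset.mem_Icc] at this ⊢; omega
  rw [h1, h2, Finset.card_sdiff_of_subset hsub, Nat.card_Icc]
  have := Finset.card_le_card hsub
  rw [Nat.card_Icc] at this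
  omega

lemma core_main (k s s' : ℕ) (L L' : Finset ℕ) (hLsub : L ⊆ Finset.Icc 1 (k-1))
    (hL' : L' = Finset.Icc 1 (k-1) \ L)
    (hsk : s < k) (hsL : s ∉ L) (hs'typ : s' ∈ L' ∨ s' = k)
    (hss' : s < s') (hgap : ∀ t, s < t → t < s' → t ∉ L') :
    newligne L s k = Finset.Icc 1 k \ newligne L' s' k := by
  have hL'sub : L' ⊆ Finset.Icc 1 (k-1) := by rw [hL']; exact Finset.sdiff_subset
  have hs'neq : s' ∉ L := by
    rcases hs'typ with hh | hh
    · rw [hL'] at hh; exact (Finset.mem_sdiff.mp hh).2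
    · intro hc; have := hLsub hc; simp only [Finset.mem_Icc] at this; omega
  have hs'arith : s' = k ∨ (1 ≤ s' ∧ s' ≤ k - 1) := by
    rcases hs'typ with hh | hh
    · have := hL'sub hh; simp only [Finset.mem_Icc] at this; right; exact this
    · left; exact hh
  ext j
  rw [Finset.mem_sdiff, Finset.mem_Icc, mem_newligne, mem_newligne]
  have hb1 : j ∈ L' ↔ (1 ≤ j ∧ j ≤ k - 1) ∧ j ∉ L := by
    rw [hL', Finset.mem_sdiff, Finset.mem_Icc]
  have hb2 : j - 1 ∈ L' ↔ (1 ≤ j - 1 ∧ j - 1 ≤ k - 1) ∧ j - 1 ∉ L := by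
    rw [hL', Finset.mem_sdiff, Finset.mem_Icc]
  by_cases a1 : j ∈ L <;> by_cases a2 : j - 1 ∈ L <;>
    by_cases c1 : j ∈ L' <;> by_cases c2 : j - 1 ∈ L'
  all_goals (try exact absurd a1 (hb1.mp c1).2)
  all_goals (try exact absurd a2 (hb2.mp c2).2)
  all_goals (try have t1 : 1 ≤ j ∧ j ≤ k - 1 := Finset.mem_Icc.mp (hLsub a1))
  all_goals (try have t2 : 1 ≤ j - 1 ∧ j - 1 ≤ k - 1 := Finset.mem_Icc.mp (hLsub a2))
  all_goals (try have t3 : ¬ (s < j ∧ j < s') := fun hh => hgap j hh.1 hh.2 c1)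
  all_goals (try have t4 : ¬ (s < j - 1 ∧ j - 1 < s') := fun hh => hgap (j-1) hh.1 hh.2 c2)
  all_goals (try have t5 : j ≠ s' := fun heq => hs'neq (heq ▸ a1))
  all_goals (try have t6 : j - 1 ≠ s' := fun heq => hs'neq (heq ▸ a2))
  all_goals (try have t7 : j ≠ s := fun heq => hsL (heq ▸ a1))
  all_goals (try have t8 : j - 1 ≠ s := fun heq => hsL (heq ▸ a2))
  all_goals (try have t9 := (hb1.mp c1).1)
  all_goals (try have t10 := (hb2.mp c2).1)
  all_goals (try have t11 : ¬ (1 ≤ j ∧ j ≤ k - 1) := fun hh => c1 (hb1.mpr ⟨hh, a1⟩))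
  all_goals (try have t12 : ¬ (1 ≤ j - 1 ∧ j - 1 ≤ k - 1) := fun hh => c2 (hb2.mpr ⟨hh, a2⟩))
  all_goals simp only [a1, a2, c1, c2, iff_true, iff_false, true_and, false_and, and_true,
    and_false, true_or, or_true, false_or, or_false, not_true, not_false_iff, not_or, not_and,
    not_false_eq_true, not_true_eq_false]
  all_goals omega

lemma Dval_desc (L : Finset ℕ) (k s : ℕ) (hLsub : L ⊆ Finset.Icc 1 (k-1))
    (h : s ∈ L ∨ s = k) (hk : 1 ≤ k) :
    Dval L s k = (L.filter (fun i => s ≤ i)).card := by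
  rcases h with h | rfl
  · rw [Dval, if_pos h]
  · have hsL : s ∉ L := fun hc => by
      have := hLsub hc; simp only [Finset.mem_Icc] at this; omega
    have : L.filter (fun i => s ≤ i) = ∅ := by
      rw [Finset.filter_eq_empty_iff]
      intro i hi
      have := hLsub hi; simp only [Finset.mem_Icc] at this; omega
    rw [Dval, if_neg hsL, if_neg (lt_irrefl _), this, Finset.card_empty]

lemma Dval_desc_le (L : Finset ℕ) (k s : ℕ) (hLsub : L ⊆ Finset.Icc 1 (k-1))
    (h : s ∈ L ∨ s = k) (hk : 1 ≤ k) :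
    Dval L s k ≤ L.card := by
  rw [Dval_desc L k s hLsub h hk]; exact Finset.card_filter_le _ _

lemma Dval_asc_lb (L : Finset ℕ) (k s : ℕ) (hLsub : L ⊆ Finset.Icc 1 (k-1))
    (h1 : s ∉ L) (h2 : s < k) :
    L.card + 1 ≤ Dval L s k := by
  rw [Dval, if_neg h1, if_pos h2]
  have hsplit := Finset.card_filter_add_card_filter_not (s := L)
    (p := fun i => s < i)
  have hle : (L.filter (fun a => ¬ s < a)).card ≤ s := by
    have hsub : L.filter (fun a => ¬ s < a) ⊆ Finset.Icc 1 s := by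
      intro i hi
      simp only [Finset.mem_filter] at hi
      have := hLsub hi.1
      simp only [Finset.mem_Icc] at this ⊢
      omega
    have := Finset.card_le_card hsub
    rw [Nat.card_Icc] at this
    omega
  omega

lemma card_compl (L L' : Finset ℕ) (k : ℕ) (hLsub : L ⊆ Finset.Icc 1 (k-1))
    (hL' : L' = Finset.Icc 1 (k-1) \ L) :
    L.card + L'.card = k - 1 := by
  have h0 : ∀ M : Finset ℕ, M ⊆ Finset.Icc 1 (k-1) → M.filter (fun i => 0 < i) = M := by
    intro M hM
    rw [Finset.filter_eq_self]
    intro i hi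
    have := hM hi; simp only [Finset.mem_Icc] at this; omega
  have := card_filter_compl L L' k 0 hLsub hL'
  rw [h0 L hLsub, h0 L' (by rw [hL']; exact Finset.sdiff_subset)] at this
  omega

lemma core_derive (k s s' : ℕ) (L L' : Finset ℕ) (hLsub : L ⊆ Finset.Icc 1 (k-1))
    (hL' : L' = Finset.Icc 1 (k-1) \ L)
    (hsL : s ∉ L) (hsk : s < k) (hdesc : s' ∈ L' ∨ s' = k)
    (hD : Dval L s k + Dval L' s' k = k) :
    s < s' ∧ ∀ t, s < t → t < s' → t ∉ L' := by
  have hk : 1 ≤ k := by omega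
  have hL'sub : L' ⊆ Finset.Icc 1 (k-1) := by rw [hL']; exact Finset.sdiff_subset
  have hDL : Dval L s k = s + 1 + (L.filter (fun i => s < i)).card := by
    rw [Dval, if_neg hsL, if_pos hsk]
  have hDL' : Dval L' s' k = (L'.filter (fun i => s' ≤ i)).card :=
    Dval_desc L' k s' hL'sub hdesc hk
  have hfc := card_filter_compl L L' k s hLsub hL'
  have hcards : (L'.filter (fun i => s' ≤ i)).card = (L'.filter (fun i => s < i)).card := by
    omega
  have hss' : s < s' := by
    by_contra hcon
    push_neg at hcon
    rcases hdesc with hmem | rfl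
    · have hsub : L'.filter (fun i => s < i) ⊆ L'.filter (fun i => s' ≤ i) := by
        intro i hi
        simp only [Finset.mem_filter] at hi ⊢
        exact ⟨hi.1, by omega⟩
      have heq := Finset.eq_of_subset_of_card_le hsub (le_of_eq hcards)
      have : s' ∈ L'.filter (fun i => s' ≤ i) := by
        simp only [Finset.mem_filter]; exact ⟨hmem, le_refl _⟩
      rw [← heq] at this
      simp only [Finset.mem_filter] at this
      omega
    · omega
  refine ⟨hss', fun t ht1 ht2 hmem => ?_⟩
  have hsub : L'.filter (fun i => s' ≤ i) ⊆ L'.filter (fun i => s < i) := by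
    intro i hi
    simp only [Finset.mem_filter] at hi ⊢
    exact ⟨hi.1, by omega⟩
  have heq := Finset.eq_of_subset_of_card_le hsub (le_of_eq hcards.symm)
  have : t ∈ L'.filter (fun i => s < i) := by
    simp only [Finset.mem_filter]; exact ⟨hmem, ht1⟩
  rw [← heq] at this
  simp only [Finset.mem_filter] at this
  omega

lemma core (k s s' : ℕ) (L L' : Finset ℕ) (hLsub : L ⊆ Finset.Icc 1 (k-1))
    (hL' : L' = Finset.Icc 1 (k-1) \ L) (hs : s ≤ k) (hs' : s' ≤ k)
    (hD : Dval L s k + Dval L' s' k = k) :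
    newligne L s k = Finset.Icc 1 k \ newligne L' s' k := by
  rcases Nat.eq_zero_or_pos k with rfl | hk
  · have hL0 : L = ∅ := by
      rw [Finset.eq_empty_iff_forall_notMem]
      intro x hx
      have := hLsub hx; simp only [Finset.mem_Icc] at this; omega
    have hL'0 : L' = ∅ := by
      rw [hL', hL0]
      simp
    have hs0 : s = 0 := by omega
    have hs'0 : s' = 0 := by omega
    subst hL0; subst hL'0; subst hs0; subst hs'0
    simp [newligne]
  have hL'sub : L' ⊆ Finset.Icc 1 (k-1) := by rw [hL']; exact Finset.sdiff_subset
  have hLL' : L = Finset.Icc 1 (k-1) \ L' := by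
    rw [hL', Finset.sdiff_sdiff_eq_self hLsub]
  have hcc := card_compl L L' k hLsub hL'
  by_cases hd1 : s ∈ L ∨ s = k <;> by_cases hd2 : s' ∈ L' ∨ s' = k
  · -- both descent-type : contradiction
    have u1 := Dval_desc_le L k s hLsub hd1 hk
    have u2 := Dval_desc_le L' k s' hL'sub hd2 hk
    omega
  · -- s descent, s' ascent: swapped main case
    push_neg at hd2
    obtain ⟨hgt, hgap⟩ := core_derive k s' s L' L hL'sub hLL' hd2.1 (by omega) hd1 (by omega)
    have := core_main k s' s L' L hL'sub hLL' (by omega) hd2.1 hd1 hgt hgap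
    rw [this, Finset.sdiff_sdiff_eq_self (newligne_subset L s k hLsub)]
  · -- s ascent, s' descent: main case
    push_neg at hd1
    obtain ⟨hgt, hgap⟩ := core_derive k s s' L L' hLsub hL' hd1.1 (by omega) hd2 hD
    exact core_main k s s' L L' hLsub hL' (by omega) hd1.1 hd2 hgt hgap
  · -- both ascent: contradiction
    push_neg at hd1; push_neg at hd2
    have u1 := Dval_asc_lb L k s hLsub hd1.1 (by omega)
    have u2 := Dval_asc_lb L' k s' hL'sub hd2.1 (by omega)
    omega

end Stmt6Aux

open Stmt6Aux

lemma mem_ligne_iff (w : List ℕ) (j : ℕ) :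
    j ∈ ligne w ↔ 1 ≤ j ∧ j ≤ w.length - 1 ∧ w.getD (j-1) 0 > w.getD j 0 := by
  simp [ligne, Finset.mem_filter, Finset.mem_Icc]; tauto

lemma ligne_subset (w : List ℕ) : ligne w ⊆ Finset.Icc 1 (w.length - 1) :=
  Finset.filter_subset _ _

lemma mem_ligne_insert (A B : List ℕ) (M : ℕ) (hA : ∀ x ∈ A, x < M)
    (hB : ∀ x ∈ B, x < M) (j : ℕ) :
    j ∈ ligne (A ++ M :: B) ↔
      (j ∈ ligne (A ++ B) ∧ j < A.length) ∨
      (j - 1 ∈ ligne (A ++ B) ∧ A.length + 1 < j) ∨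
      (A.length < (A ++ B).length ∧ j = A.length + 1) := by
  have hul : (A ++ B).length = A.length + B.length := by simp
  have hwl : (A ++ M :: B).length = A.length + B.length + 1 := by simp; omega
  have g1 : ∀ i < A.length, (A ++ M :: B).getD i 0 = (A ++ B).getD i 0 := by
    intro i hi
    rw [List.getD_append _ _ _ _ hi, List.getD_append _ _ _ _ hi]
  have g2 : (A ++ M :: B).getD A.length 0 = M := by
    rw [List.getD_append_right _ _ _ _ (le_refl _)]
    simp
  have g3 : ∀ i, A.length < i → (A ++ M :: B).getD i 0 = (A ++ B).getD (i - 1) 0 := by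
    intro i hi
    rw [List.getD_append_right A (M :: B) 0 i (by omega),
      List.getD_append_right A B 0 (i - 1) (by omega)]
    have he : i - A.length = (i - 1 - A.length) + 1 := by omega
    rw [he]
    simp
  have hu_lt : ∀ t, t < (A ++ B).length → (A ++ B).getD t 0 < M := by
    intro t ht
    rw [List.getD_eq_getElem _ _ ht]
    have hmem := List.getElem_mem (l := A ++ B) (n := t) ht
    rw [List.mem_append] at hmem
    rcases hmem with hm | hm
    · exact hA _ hm
    · exact hB _ hm
  rw [mem_ligne_iff, mem_ligne_iff, mem_ligne_iff]
  by_cases h1 : j < A.length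
  · have e1 : (A ++ M :: B).getD (j - 1) 0 = (A ++ B).getD (j - 1) 0 := g1 _ (by omega)
    have e2 : (A ++ M :: B).getD j 0 = (A ++ B).getD j 0 := g1 _ h1
    rw [e1, e2]
    constructor
    · rintro ⟨hj1, hj2, hj3⟩
      exact Or.inl ⟨⟨hj1, by omega, hj3⟩, h1⟩
    · rintro (⟨⟨u1, u2, u3⟩, _⟩ | ⟨⟨u1, u2, u3⟩, hgt⟩ | ⟨hlt, heq⟩)
      · exact ⟨u1, by omega, u3⟩
      · omega
      · omega
  · by_cases h2 : j = A.length
    · subst h2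
      constructor
      · rintro ⟨hj1, hj2, hj3⟩
        exfalso
        have e1 : (A ++ M :: B).getD (A.length - 1) 0 = (A ++ B).getD (A.length - 1) 0 :=
          g1 _ (by omega)
        rw [e1, g2] at hj3
        have := hu_lt (A.length - 1) (by omega)
        omega
      · rintro (⟨⟨u1, u2, u3⟩, hlt⟩ | ⟨⟨u1, u2, u3⟩, hgt⟩ | ⟨hlt, heq⟩) <;> omega
    · by_cases h3 : j = A.length + 1
      · subst h3
        by_cases hB0 : A.length < (A ++ B).length
        · apply iff_of_true
          · refine ⟨by omega, by omega, ?_⟩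
            have e2 : (A ++ M :: B).getD (A.length + 1) 0 = (A ++ B).getD A.length 0 := by
              rw [g3 _ (by omega)]
              simp
            rw [e2]
            simp only [Nat.add_sub_cancel, g2]
            exact hu_lt _ hB0
          · exact Or.inr (Or.inr ⟨hB0, rfl⟩)
        · apply iff_of_false
          · rintro ⟨hj1, hj2, hj3⟩
            omega
          · rintro (⟨⟨u1, u2, u3⟩, hlt⟩ | ⟨⟨u1, u2, u3⟩, hgt⟩ | ⟨hlt, heq⟩) <;> omega
      · -- j ≥ A.length + 2
        have hge : A.length + 2 ≤ j := by omega
        have e1 : (A ++ M :: B).getD (j - 1) 0 = (A ++ B).getD (j - 1 - 1) 0 :=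
          g3 (j - 1) (by omega)
        have e2 : (A ++ M :: B).getD j 0 = (A ++ B).getD (j - 1) 0 := g3 j (by omega)
        rw [e1, e2]
        constructor
        · rintro ⟨hj1, hj2, hj3⟩
          exact Or.inr (Or.inl ⟨⟨by omega, by omega, hj3⟩, by omega⟩)
        · rintro (⟨⟨u1, u2, u3⟩, hlt⟩ | ⟨⟨u1, u2, u3⟩, hgt⟩ | ⟨hlt, heq⟩)
          · omega
          · exact ⟨by omega, by omega, u3⟩
          · omega

lemma ligne_insert (A B : List ℕ) (M : ℕ) (hA : ∀ x ∈ A, x < M)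
    (hB : ∀ x ∈ B, x < M) :
    ligne (A ++ M :: B) = newligne (ligne (A ++ B)) A.length (A ++ B).length := by
  ext j
  rw [mem_ligne_insert A B M hA hB, mem_newligne]

lemma maj_insert (A B : List ℕ) (M : ℕ) (hA : ∀ x ∈ A, x < M)
    (hB : ∀ x ∈ B, x < M) :
    maj (A ++ M :: B) = maj (A ++ B) + Dval (ligne (A ++ B)) A.length (A ++ B).length := by
  rw [maj, maj, ligne_insert A B M hA hB]
  exact sum_newligne _ _ _ (ligne_subset _) (by simp)

lemma isPermWord_length {n : ℕ} {w : List ℕ} (h : IsPermWord n w) : w.length = n := by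
  simpa using h.length_eq

lemma isPermWord_filter {n : ℕ} {w : List ℕ} (h : IsPermWord (n+1) w) :
    IsPermWord n (w.filter (fun x => x ≤ n)) := by
  unfold IsPermWord at *
  have h2 := h.filter (fun x => decide (x ≤ n))
  have h3 : (List.range' 1 (n+1)).filter (fun x => decide (x ≤ n)) = List.range' 1 n := by
    have : List.range' 1 (n+1) = List.range' 1 n ++ [n+1] := by
      rw [List.range'_concat]
      norm_num
      omega
    rw [this, List.filter_append]
    have e1 : (List.range' 1 n).filter (fun x => decide (x ≤ n)) = List.range' 1 n := by
      rw [List.filter_eq_self]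
      intro x hx
      rw [List.mem_range'_1] at hx
      simp only [decide_eq_true_eq]
      omega
    have e2 : ([n+1] : List ℕ).filter (fun x => decide (x ≤ n)) = [] := by
      simp
    rw [e1, e2, List.append_nil]
  rw [h3] at h2
  exact h2

lemma majcode_split {n : ℕ} {w : List ℕ} (h : IsPermWord (n+1) w) :
    majcode w = majcode (w.filter (fun x => x ≤ n)) ++ [maj w - maj (w.filter (fun x => x ≤ n))] := by
  have hlw : w.length = n + 1 := isPermWord_length h
  have hlf : (w.filter (fun x => x ≤ n)).length = n := isPermWord_length (isPermWord_filter h)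
  have key : ∀ j ≤ n, (w.filter (fun x => x ≤ n)).filter (fun x => x ≤ j) = w.filter (fun x => x ≤ j) := by
    intro j hj
    rw [List.filter_filter]
    apply List.filter_congr
    intro x _
    by_cases hx : x ≤ j
    · simp [hx]; omega
    · simp [hx]
  unfold majcode
  rw [hlw, hlf, List.range_succ, List.map_append]
  congr 1
  · apply List.map_congr_left
    intro i hi
    rw [List.mem_range] at hi
    rw [key (i+1) (by omega), key i (by omega)]
  · have hself : w.filter (fun x => x ≤ n + 1) = w := by
      rw [List.filter_eq_self]
      intro x hx
      have hxm : x ∈ List.range' 1 (n+1) := h.subset hx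
      rw [List.mem_range'_1] at hxm
      simp only [decide_eq_true_eq]
      omega
    simp only [List.map_singleton, hself]

lemma deltaC_concat (x : List ℕ) (y : ℕ) :
    deltaC (x ++ [y]) = deltaC x ++ [x.length - y] := by
  unfold deltaC
  rw [List.length_append, List.length_singleton, List.range_succ, List.map_append]
  congr 1
  · apply List.map_congr_left
    intro i hi
    rw [List.mem_range] at hi
    rw [List.getD_append _ _ _ _ hi]
  · have : (x ++ [y]).getD x.length 0 = y := by
      rw [List.getD_append_right _ _ _ _ (le_refl _)]
      simp
    simp [this]

theorem stmt6 (n : ℕ) (σ τ : List ℕ) (hσ : IsPermWord n σ) (hτ : IsPermWord n τ)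
    (h : majcode σ = deltaC (majcode τ)) :
    ligne σ = Finset.Icc 1 (n - 1) \ ligne τ := by
  induction n generalizing σ τ with
  | zero =>
    have hs : σ = [] := by simpa [IsPermWord] using hσ
    have ht : τ = [] := by simpa [IsPermWord] using hτ
    subst hs; subst ht
    simp [ligne]
  | succ n ih =>
    -- decompose σ and τ at the letter n+1
    have hmemσ : n + 1 ∈ σ := hσ.mem_iff.mpr (by rw [List.mem_range'_1]; omega)
    obtain ⟨A, B, rfl⟩ := List.append_of_mem hmemσ
    have hmemτ : n + 1 ∈ τ := hτ.mem_iff.mpr (by rw [List.mem_range'_1]; omega)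
    obtain ⟨C, D, rfl⟩ := List.append_of_mem hmemτ
    have hcnt1 : (List.range' 1 (n+1)).count (n+1) = 1 :=
      List.count_eq_one_of_mem (List.nodup_range' (s := 1) (n := n+1)) (by rw [List.mem_range'_1]; omega)
    have hbnd : ∀ {w : List ℕ}, w.Perm (List.range' 1 (n+1)) → ∀ x ∈ w, x ≤ n + 1 := by
      intro w hw x hx
      have := hw.subset hx
      rw [List.mem_range'_1] at this
      omega
    have hmk : ∀ (X Y : List ℕ), (X ++ (n+1) :: Y).Perm (List.range' 1 (n+1)) →
        (∀ x ∈ X, x < n + 1) ∧ (∀ x ∈ Y, x < n + 1) := by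
      intro X Y hw
      have hcnt := hw.count_eq (n+1)
      rw [hcnt1, List.count_append, List.count_cons_self] at hcnt
      have hX0 : X.count (n+1) = 0 := by omega
      have hY0 : Y.count (n+1) = 0 := by omega
      constructor
      · intro x hx
        have h1 := hbnd hw (x := x) (by simp [hx])
        have h2 : x ≠ n + 1 := fun he => by
          rw [← List.count_pos_iff] at hx
          rw [he] at hx
          omega
        omega
      · intro x hx
        have h1 := hbnd hw (x := x) (by simp [hx])
        have h2 : x ≠ n + 1 := fun he => by
          rw [← List.count_pos_iff] at hx
          rw [he] at hx
          omega
        omega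
    obtain ⟨hA, hB⟩ := hmk A B hσ
    obtain ⟨hC, hD⟩ := hmk C D hτ
    have hfilter : ∀ (X Y : List ℕ), (∀ x ∈ X, x < n + 1) → (∀ x ∈ Y, x < n + 1) →
        (X ++ (n+1) :: Y).filter (fun x => x ≤ n) = X ++ Y := by
      intro X Y hX hY
      rw [List.filter_append, List.filter_cons]
      have e0 : (decide (n + 1 ≤ n)) = false := by simp
      rw [e0]
      simp only [Bool.false_eq_true, if_false]
      have e1 : X.filter (fun x => x ≤ n) = X := by
        rw [List.filter_eq_self]
        intro x hx
        simp only [decide_eq_true_eq]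
        exact Nat.lt_succ_iff.mp (hX x hx)
      have e2 : Y.filter (fun x => x ≤ n) = Y := by
        rw [List.filter_eq_self]
        intro x hx
        simp only [decide_eq_true_eq]
        exact Nat.lt_succ_iff.mp (hY x hx)
      rw [e1, e2]
    have hfσ := hfilter A B hA hB
    have hfτ := hfilter C D hC hD
    have hpσ' : IsPermWord n (A ++ B) := by
      rw [← hfσ]; exact isPermWord_filter hσ
    have hpτ' : IsPermWord n (C ++ D) := by
      rw [← hfτ]; exact isPermWord_filter hτ
    have hkσ : (A ++ B).length = n := isPermWord_length hpσ'
    have hkτ : (C ++ D).length = n := isPermWord_length hpτ'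
    have hms := majcode_split hσ
    rw [hfσ] at hms
    have hmt := majcode_split hτ
    rw [hfτ] at hmt
    rw [hms, hmt, deltaC_concat] at h
    have hmclen : ∀ (w : List ℕ), (majcode w).length = w.length := by
      intro w; simp [majcode]
    have hdlen : ∀ (w : List ℕ), (deltaC w).length = w.length := by
      intro w; simp [deltaC]
    obtain ⟨h1, h2⟩ := List.append_inj h (by rw [hmclen, hdlen, hmclen, hkσ, hkτ])
    have IH := ih (A ++ B) (C ++ D) hpσ' hpτ' h1
    have hmajσ := maj_insert A B (n+1) hA hB
    have hmajτ := maj_insert C D (n+1) hC hD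
    rw [hkσ] at hmajσ
    rw [hkτ] at hmajτ
    have h2' : maj (A ++ (n+1) :: B) - maj (A ++ B)
        = (majcode (C ++ D)).length - (maj (C ++ (n+1) :: D) - maj (C ++ D)) := by
      simpa using h2
    rw [hmclen, hkτ] at h2'
    have hsubσ : ligne (A ++ B) ⊆ Finset.Icc 1 (n - 1) := by
      have := ligne_subset (A ++ B)
      rwa [hkσ] at this
    have hsubτ : ligne (C ++ D) ⊆ Finset.Icc 1 (n - 1) := by
      have := ligne_subset (C ++ D)
      rwa [hkτ] at this
    have hDτ_le : Dval (ligne (C ++ D)) C.length n ≤ n := Dval_le _ _ _ hsubτ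
    have hsum : Dval (ligne (C ++ D)) C.length n + Dval (ligne (A ++ B)) A.length n = n := by
      omega
    have hsA : A.length ≤ n := by
      rw [← hkσ]; simp
    have hsC : C.length ≤ n := by
      rw [← hkτ]; simp
    have hcore := core n C.length A.length (ligne (C ++ D)) (ligne (A ++ B))
      hsubτ IH hsC hsA hsum
    have hlσ : ligne (A ++ (n+1) :: B) = newligne (ligne (A ++ B)) A.length n := by
      rw [ligne_insert A B (n+1) hA hB, hkσ]
    have hlτ : ligne (C ++ (n+1) :: D) = newligne (ligne (C ++ D)) C.length n := by
      rw [ligne_insert C D (n+1) hC hD, hkτ]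
    rw [hlσ, hlτ, Nat.add_sub_cancel, hcore,
      Finset.sdiff_sdiff_eq_self (newligne_subset _ _ _ hsubσ)]
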